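/- For every nonnegative integer n and real y with y^2 = 1+4x, the n-th coefficient identity P_n(y)^2 = ∑_{k=0}^n C(n,k) C(n+k,n) C(2k,k) x^k holds, where P_n is the Legendre polynomial. -/

import Mathlib

/-- The `n`-th Legendre polynomial, as a function on `ℝ`:
`P n y = 2^{-n} ∑_{k=0}^n C(n,k)^2 (y-1)^{n-k} (y+1)^k`. -/
noncomputable def legendreP (n : ℕ) (y : ℝ) : ℝ :=
  2^(-(n : ℤ)) * ∑ k ∈ Finset.range (n + 1),
    (n.choose k : ℝ)^2 * (y - 1)^(n - k) * (y + 1)^k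

open Finset Nat


/-- coefficient in Clausen's sum -/
noncomputable def wc (n k : ℕ) : ℝ :=
  (n.choose k : ℝ) * ((n + k).choose n : ℝ) * ((2 * k).choose k : ℝ)

/-- coefficient of shifted Legendre polynomial -/
noncomputable def bc (n k : ℕ) : ℝ := (n.choose k : ℝ) * ((n + k).choose k : ℝ)

lemma wc_zero {n k : ℕ} (h : n < k) : wc n k = 0 := by
  simp [wc, Nat.choose_eq_zero_of_lt h]

lemma bc_zero {n k : ℕ} (h : n < k) : bc n k = 0 := by
  simp [bc, Nat.choose_eq_zero_of_lt h]

lemma wc_zero' (m : ℕ) : wc m 0 = 1 := by simp [wc]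

lemma bc_zero' (m : ℕ) : bc m 0 = 1 := by simp [bc]

lemma wc_eq (k a : ℕ) : wc (k + a) k =
    ((k + a + k)! : ℝ) * ((2 * k)! : ℝ) / ((a ! : ℝ) * ((k ! : ℝ))^4) := by
  have h1 : k ≤ k + a := Nat.le_add_right k a
  have h2 : k + a ≤ k + a + k := Nat.le_add_right _ k
  have h3 : k ≤ 2 * k := by omega
  rw [wc, Nat.cast_choose ℝ h1, Nat.cast_choose ℝ h2, Nat.cast_choose ℝ h3]
  rw [show k + a - k = a by omega, show k + a + k - (k + a) = k by omega,
    show 2 * k - k = k by omega]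
  have f1 : ((k)! : ℝ) ≠ 0 := Nat.cast_ne_zero.mpr (Nat.factorial_ne_zero k)
  have f2 : ((a)! : ℝ) ≠ 0 := Nat.cast_ne_zero.mpr (Nat.factorial_ne_zero a)
  have f3 : (((k+a))! : ℝ) ≠ 0 := Nat.cast_ne_zero.mpr (Nat.factorial_ne_zero _)
  field_simp

lemma bc_eq (k a : ℕ) : bc (k + a) k =
    ((k + a + k)! : ℝ) / ((a ! : ℝ) * ((k ! : ℝ))^2) := by
  have h1 : k ≤ k + a := Nat.le_add_right k a
  have h2 : k ≤ k + a + k := by omega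
  rw [bc, Nat.cast_choose ℝ h1, Nat.cast_choose ℝ h2]
  rw [show k + a - k = a by omega, show k + a + k - k = k + a by omega]
  have f1 : ((k)! : ℝ) ≠ 0 := Nat.cast_ne_zero.mpr (Nat.factorial_ne_zero k)
  have f2 : ((a)! : ℝ) ≠ 0 := Nat.cast_ne_zero.mpr (Nat.factorial_ne_zero a)
  have f3 : (((k+a))! : ℝ) ≠ 0 := Nat.cast_ne_zero.mpr (Nat.factorial_ne_zero _)
  field_simp

lemma fact_ne (m : ℕ) : ((m)! : ℝ) ≠ 0 := Nat.cast_ne_zero.mpr (Nat.factorial_ne_zero m)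

lemma L1R (n k : ℕ) : ((n : ℝ) + 1 - k) * wc (n + 1) k = ((n : ℝ) + 1 + k) * wc n k := by
  rcases le_or_gt k n with h | h
  · obtain ⟨a, rfl⟩ := Nat.exists_eq_add_of_le h
    rw [show k + a + 1 = k + (a + 1) by ring, wc_eq k (a + 1), wc_eq k a,
      show k + (a + 1) + k = (k + a + k) + 1 by ring, Nat.factorial_succ (k + a + k),
      Nat.factorial_succ a]
    have := fact_ne k; have := fact_ne a; have := fact_ne (k + a + k)
    have ha1 : ((a : ℝ) + 1) ≠ 0 := by positivity
    field_simp
    push_cast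
    ring
  · rcases eq_or_lt_of_le (by omega : n + 1 ≤ k) with h' | h'
    · subst h'
      rw [wc_zero (Nat.lt_succ_self n)]
      push_cast
      ring
    · rw [wc_zero h', wc_zero (by omega : n < k)]
      ring

lemma BcR (n k : ℕ) : ((n : ℝ) + 2)^2 * wc (n + 2) (k + 1) =
    (2 * (n : ℝ) + 3) * (2 * (k : ℝ) + 3) * wc (n + 1) (k + 1)
    + 4 * (2 * (n : ℝ) + 3) * (2 * (k : ℝ) + 1) * wc (n + 1) k
    + ((n : ℝ) + 1)^2 * wc n (k + 1) := by
  rcases le_or_gt (k + 1) n with h | h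
  · obtain ⟨a, rfl⟩ := Nat.exists_eq_add_of_le h
    have E3 : wc ((k + 1) + (a + 1)) k =
        ((k + a + k + 2)! : ℝ) * ((2 * k)! : ℝ) / (((a + 2)! : ℝ) * ((k ! : ℝ))^4) := by
      rw [show (k + 1) + (a + 1) = k + (a + 2) by ring, wc_eq k (a + 2),
        show k + (a + 2) + k = k + a + k + 2 by ring]
    rw [show k + 1 + a + 2 = (k + 1) + (a + 2) by ring,
      show k + 1 + a + 1 = (k + 1) + (a + 1) by ring,
      wc_eq (k + 1) (a + 2), wc_eq (k + 1) (a + 1), E3, wc_eq (k + 1) a,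
      show (k + 1) + (a + 2) + (k + 1) = (k + a + k + 2) + 1 + 1 by ring,
      show (k + 1) + (a + 1) + (k + 1) = (k + a + k + 2) + 1 by ring,
      show (k + 1) + a + (k + 1) = k + a + k + 2 by ring,
      show 2 * (k + 1) = (2 * k) + 1 + 1 by ring,
      show a + 2 = a + 1 + 1 by ring]
    simp only [Nat.factorial_succ]
    have := fact_ne a; have := fact_ne (k + a + k + 2); have := fact_ne (2 * k)
    have := fact_ne k; have := fact_ne (a + 1)
    push_cast
    field_simp
    ring
  · rcases eq_or_lt_of_le (by omega : n ≤ k) with h' | h'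
    · subst h'
      have E1 : wc (n + 2) (n + 1) =
          ((n + 1 + n + 2)! : ℝ) * ((2 * n + 1 + 1)! : ℝ) / ((1 ! : ℝ) * (((n + 1)! : ℝ))^4) := by
        rw [show n + 2 = (n + 1) + 1 by ring, wc_eq (n + 1) 1,
          show (n + 1) + 1 + (n + 1) = n + 1 + n + 2 by ring,
          show 2 * (n + 1) = 2 * n + 1 + 1 by ring]
      have E2 : wc (n + 1) (n + 1) =
          ((n + 1 + n + 1)! : ℝ) * ((2 * n + 1 + 1)! : ℝ) / ((0 ! : ℝ) * (((n + 1)! : ℝ))^4) := by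
        rw [show n + 1 = (n + 1) + 0 by ring, wc_eq (n + 1) 0,
          show (n + 1) + 0 + (n + 1) = n + 1 + n + 1 by ring,
          show 2 * ((n + 1) + 0) = 2 * n + 1 + 1 by ring]
      have E3 : wc (n + 1) n =
          ((n + 1 + n)! : ℝ) * ((2 * n)! : ℝ) / ((1 ! : ℝ) * ((n ! : ℝ))^4) := by
        rw [wc_eq n 1]
      rw [E1, E2, E3, wc_zero (Nat.lt_succ_self n),
        show n + 1 + n + 2 = (n + 1 + n) + 1 + 1 by ring,
        show n + 1 + n + 1 = (n + 1 + n) + 1 by ring,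
        show 2 * n + 1 + 1 = (2 * n) + 1 + 1 by ring]
      simp only [Nat.factorial_succ, Nat.factorial_zero]
      have := fact_ne n; have := fact_ne (n + 1 + n); have := fact_ne (2 * n)
      push_cast
      field_simp
      ring
    · rcases eq_or_lt_of_le (by omega : n + 1 ≤ k) with h2 | h2
      · subst h2
        rw [show n + 1 + 1 = n + 2 by ring]
        have E1 := wc_eq (n + 2) 0
        have E2 := wc_eq (n + 1) 0
        simp only [Nat.add_zero] at E1 E2
        rw [E1, E2, wc_zero (by omega : n + 1 < n + 2), wc_zero (by omega : n < n + 2),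
          show n + 2 + (n + 2) = (n + 1 + (n + 1)) + 1 + 1 by ring,
          show 2 * (n + 2) = (2 * (n + 1)) + 1 + 1 by ring,
          show n + 2 = (n + 1) + 1 by ring]
        simp only [Nat.factorial_succ, Nat.factorial_zero]
        have := fact_ne (n + 1); have := fact_ne (n + 1 + (n + 1)); have := fact_ne (2 * (n + 1))
        push_cast
        field_simp
        ring
      · rw [wc_zero (by omega : n + 2 < k + 1), wc_zero (by omega : n + 1 < k + 1),
          wc_zero (by omega : n + 1 < k), wc_zero (by omega : n < k + 1)]
        ring

lemma BCb (n k : ℕ) : ((n : ℝ) + 2) * bc (n + 2) (k + 1) =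
    (2 * (n : ℝ) + 3) * (2 * bc (n + 1) k + bc (n + 1) (k + 1))
    - ((n : ℝ) + 1) * bc n (k + 1) := by
  rcases le_or_gt (k + 1) n with h | h
  · obtain ⟨a, rfl⟩ := Nat.exists_eq_add_of_le h
    have E3 : bc ((k + 1) + (a + 1)) k =
        ((k + a + k + 2)! : ℝ) / (((a + 2)! : ℝ) * ((k ! : ℝ))^2) := by
      rw [show (k + 1) + (a + 1) = k + (a + 2) by ring, bc_eq k (a + 2),
        show k + (a + 2) + k = k + a + k + 2 by ring]
    rw [show k + 1 + a + 2 = (k + 1) + (a + 2) by ring,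
      show k + 1 + a + 1 = (k + 1) + (a + 1) by ring,
      bc_eq (k + 1) (a + 2), bc_eq (k + 1) (a + 1), E3, bc_eq (k + 1) a,
      show (k + 1) + (a + 2) + (k + 1) = (k + a + k + 2) + 1 + 1 by ring,
      show (k + 1) + (a + 1) + (k + 1) = (k + a + k + 2) + 1 by ring,
      show (k + 1) + a + (k + 1) = k + a + k + 2 by ring,
      show a + 2 = a + 1 + 1 by ring]
    simp only [Nat.factorial_succ]
    have := fact_ne a; have := fact_ne (k + a + k + 2)
    have := fact_ne k; have := fact_ne (a + 1)
    push_cast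
    field_simp
    ring
  · rcases eq_or_lt_of_le (by omega : n ≤ k) with h' | h'
    · subst h'
      have E1 : bc (n + 2) (n + 1) =
          ((n + 1 + n + 2)! : ℝ) / ((1 ! : ℝ) * (((n + 1)! : ℝ))^2) := by
        rw [show n + 2 = (n + 1) + 1 by ring, bc_eq (n + 1) 1,
          show (n + 1) + 1 + (n + 1) = n + 1 + n + 2 by ring]
      have E2 : bc (n + 1) (n + 1) =
          ((n + 1 + n + 1)! : ℝ) / ((0 ! : ℝ) * (((n + 1)! : ℝ))^2) := by
        rw [show n + 1 = (n + 1) + 0 by ring, bc_eq (n + 1) 0,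
          show (n + 1) + 0 + (n + 1) = n + 1 + n + 1 by ring]
      have E3 : bc (n + 1) n = ((n + 1 + n)! : ℝ) / ((1 ! : ℝ) * ((n ! : ℝ))^2) := by
        rw [bc_eq n 1]
      rw [E1, E2, E3, bc_zero (Nat.lt_succ_self n),
        show n + 1 + n + 2 = (n + 1 + n) + 1 + 1 by ring,
        show n + 1 + n + 1 = (n + 1 + n) + 1 by ring]
      simp only [Nat.factorial_succ, Nat.factorial_zero]
      have := fact_ne n; have := fact_ne (n + 1 + n)
      push_cast
      field_simp
      ring
    · rcases eq_or_lt_of_le (by omega : n + 1 ≤ k) with h2 | h2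
      · subst h2
        rw [show n + 1 + 1 = n + 2 by ring]
        have E1 := bc_eq (n + 2) 0
        have E2 := bc_eq (n + 1) 0
        simp only [Nat.add_zero] at E1 E2
        rw [E1, E2, bc_zero (by omega : n + 1 < n + 2), bc_zero (by omega : n < n + 2),
          show n + 2 + (n + 2) = (n + 1 + (n + 1)) + 1 + 1 by ring,
          show n + 2 = (n + 1) + 1 by ring]
        simp only [Nat.factorial_succ, Nat.factorial_zero]
        have := fact_ne (n + 1); have := fact_ne (n + 1 + (n + 1))
        push_cast
        field_simp
        ring
      · rw [bc_zero (by omega : n + 2 < k + 1), bc_zero (by omega : n + 1 < k + 1),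
          bc_zero (by omega : n + 1 < k), bc_zero (by omega : n < k + 1)]
        ring

/-- shifted Legendre polynomial -/
noncomputable def Ph (n : ℕ) (t : ℝ) : ℝ := ∑ k ∈ range (n + 1), bc n k * t^k
/-- Clausen RHS -/
noncomputable def Wf (n : ℕ) (x : ℝ) : ℝ := ∑ k ∈ range (n + 1), wc n k * x^k
/-- auxiliary sum -/
noncomputable def sg (n : ℕ) (x : ℝ) : ℝ :=
  ∑ k ∈ range (n + 1), ((n : ℝ) - k) * wc n k * x^k

lemma Wf_pad (n m : ℕ) (x : ℝ) (h : n + 1 ≤ m) :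
    Wf n x = ∑ k ∈ range m, wc n k * x^k := by
  rw [Wf]
  apply Finset.sum_subset (Finset.range_subset_range.mpr h)
  intro k hk hnk
  rw [wc_zero (by simp at hnk; omega), zero_mul]

lemma sf_pad (n m : ℕ) (x : ℝ) (h : n + 1 ≤ m) :
    sg n x = ∑ k ∈ range m, ((n : ℝ) - k) * wc n k * x^k := by
  rw [sg]
  apply Finset.sum_subset (Finset.range_subset_range.mpr h)
  intro k hk hnk
  rw [wc_zero (by simp at hnk; omega), mul_zero, zero_mul]

lemma Ph_pad (n m : ℕ) (t : ℝ) (h : n + 1 ≤ m) :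
    Ph n t = ∑ k ∈ range m, bc n k * t^k := by
  rw [Ph]
  apply Finset.sum_subset (Finset.range_subset_range.mpr h)
  intro k hk hnk
  rw [bc_zero (by simp at hnk; omega), zero_mul]

lemma SA (n : ℕ) (x : ℝ) :
    sg (n + 2) x = (2 * (n : ℝ) + 3) * Wf (n + 1) x - sg (n + 1) x := by
  rw [sg, Wf_pad (n + 1) (n + 3) x (by omega), sf_pad (n + 1) (n + 3) x (by omega),
    Finset.mul_sum, ← Finset.sum_sub_distrib]
  refine Finset.sum_congr rfl fun k _ => ?_
  have := L1R (n + 1) k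
  push_cast at this ⊢
  linear_combination x^k * this

lemma SB (n : ℕ) (x : ℝ) :
    ((n : ℝ) + 2)^2 * Wf (n + 2) x =
      (2 * (n : ℝ) + 3) * (1 + 4 * x) *
        ((2 * (n : ℝ) + 3) * Wf (n + 1) x - 2 * sg (n + 1) x)
      + ((n : ℝ) + 1)^2 * Wf n x := by
  have hU : (2 * (n : ℝ) + 3) * Wf (n + 1) x - 2 * sg (n + 1) x =
      ∑ k ∈ range (n + 2), (2 * (k : ℝ) + 1) * wc (n + 1) k * x^k := by
    rw [Wf, sg, Finset.mul_sum, Finset.mul_sum, ← Finset.sum_sub_distrib]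
    refine Finset.sum_congr rfl fun k _ => ?_
    push_cast
    ring
  rw [hU]
  have key : ∑ k ∈ range (n + 3),
      (((n : ℝ) + 2)^2 * wc (n + 2) k - (2 * (n : ℝ) + 3) * (2 * (k : ℝ) + 1) * wc (n + 1) k
        - ((n : ℝ) + 1)^2 * wc n k) * x^k =
      ∑ k ∈ range (n + 2), 4 * (2 * (n : ℝ) + 3) * ((2 * (k : ℝ) + 1) * wc (n + 1) k) * x^(k+1) := by
    rw [Finset.sum_range_succ']
    simp only [Nat.cast_zero]
    have h0 : (((n : ℝ) + 2)^2 * wc (n + 2) 0 - (2 * (n : ℝ) + 3) * (2 * (0 : ℝ) + 1) * wc (n + 1) 0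
        - ((n : ℝ) + 1)^2 * wc n 0) * x^0 = 0 := by
      rw [wc_zero', wc_zero', wc_zero']
      push_cast
      ring
    rw [h0, add_zero]
    refine Finset.sum_congr rfl fun k _ => ?_
    have := BcR n k
    push_cast at this ⊢
    linear_combination x^(k+1) * this
  have expand : ((n : ℝ) + 2)^2 * Wf (n + 2) x
      - (2 * (n : ℝ) + 3) * (∑ k ∈ range (n + 2), (2 * (k : ℝ) + 1) * wc (n + 1) k * x^k)
      - ((n : ℝ) + 1)^2 * Wf n x =
      ∑ k ∈ range (n + 3),
        (((n : ℝ) + 2)^2 * wc (n + 2) k - (2 * (n : ℝ) + 3) * (2 * (k : ℝ) + 1) * wc (n + 1) k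
          - ((n : ℝ) + 1)^2 * wc n k) * x^k := by
    rw [Wf, Wf_pad n (n + 3) x (by omega)]
    rw [show ∑ k ∈ range (n + 2), (2 * (k : ℝ) + 1) * wc (n + 1) k * x^k =
        ∑ k ∈ range (n + 3), (2 * (k : ℝ) + 1) * wc (n + 1) k * x^k from
      Finset.sum_subset (Finset.range_subset_range.mpr (by omega))
        (fun k _ hnk => by rw [wc_zero (by simp at hnk; omega)]; ring)]
    rw [Finset.mul_sum, Finset.mul_sum, Finset.mul_sum, ← Finset.sum_sub_distrib,
      ← Finset.sum_sub_distrib]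
    refine Finset.sum_congr rfl fun k _ => ?_
    ring
  have rhs : (2 * (n : ℝ) + 3) * (4 * x) *
      (∑ k ∈ range (n + 2), (2 * (k : ℝ) + 1) * wc (n + 1) k * x^k) =
      ∑ k ∈ range (n + 2), 4 * (2 * (n : ℝ) + 3) * ((2 * (k : ℝ) + 1) * wc (n + 1) k) * x^(k+1) := by
    rw [Finset.mul_sum]
    refine Finset.sum_congr rfl fun k _ => ?_
    ring
  nlinarith [expand, key, rhs]

lemma PhB (n : ℕ) (t : ℝ) :
    ((n : ℝ) + 2) * Ph (n + 2) t =
      (2 * (n : ℝ) + 3) * (2 * t + 1) * Ph (n + 1) t - ((n : ℝ) + 1) * Ph n t := by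
  have key : ∑ k ∈ range (n + 3),
      (((n : ℝ) + 2) * bc (n + 2) k - (2 * (n : ℝ) + 3) * bc (n + 1) k
        + ((n : ℝ) + 1) * bc n k) * t^k =
      ∑ k ∈ range (n + 2), 2 * (2 * (n : ℝ) + 3) * bc (n + 1) k * t^(k+1) := by
    rw [Finset.sum_range_succ']
    have h0 : (((n : ℝ) + 2) * bc (n + 2) 0 - (2 * (n : ℝ) + 3) * bc (n + 1) 0
        + ((n : ℝ) + 1) * bc n 0) * t^0 = 0 := by
      rw [bc_zero', bc_zero', bc_zero']; ring
    rw [h0, add_zero]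
    refine Finset.sum_congr rfl fun k _ => ?_
    have := BCb n k
    push_cast at this ⊢
    linear_combination t^(k+1) * this
  have expand : ((n : ℝ) + 2) * Ph (n + 2) t - (2 * (n : ℝ) + 3) * Ph (n + 1) t
      + ((n : ℝ) + 1) * Ph n t =
      ∑ k ∈ range (n + 3),
        (((n : ℝ) + 2) * bc (n + 2) k - (2 * (n : ℝ) + 3) * bc (n + 1) k
          + ((n : ℝ) + 1) * bc n k) * t^k := by
    rw [Ph, Ph_pad (n + 1) (n + 3) t (by omega), Ph_pad n (n + 3) t (by omega),
      Finset.mul_sum, Finset.mul_sum, Finset.mul_sum, ← Finset.sum_sub_distrib,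
      ← Finset.sum_add_distrib]
    refine Finset.sum_congr rfl fun k _ => ?_
    ring
  have rhs : (2 * (n : ℝ) + 3) * (2 * t) * Ph (n + 1) t =
      ∑ k ∈ range (n + 2), 2 * (2 * (n : ℝ) + 3) * bc (n + 1) k * t^(k+1) := by
    rw [Ph, Finset.mul_sum]
    refine Finset.sum_congr rfl fun k _ => ?_
    ring
  linear_combination expand + key - rhs

lemma coefS1 {n m : ℕ} (hm : m ≤ n) :
    ∑ k ∈ range (m + 1), n.choose k * n.choose k * (n - k).choose (m - k) =
      n.choose m * (n + m).choose m := by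
  have step : ∀ k ∈ range (m + 1),
      n.choose k * n.choose k * (n - k).choose (m - k) =
        n.choose m * (m.choose k * n.choose k) := by
    intro k hk
    have hk' : k ≤ m := by simp at hk; omega
    have h : n.choose m * m.choose k = n.choose k * (n - k).choose (m - k) := Nat.choose_mul hk'
    calc n.choose k * n.choose k * (n - k).choose (m - k)
        = (n.choose k * (n - k).choose (m - k)) * n.choose k := by ring
      _ = (n.choose m * m.choose k) * n.choose k := by rw [← h]
      _ = n.choose m * (m.choose k * n.choose k) := by ring
  rw [Finset.sum_congr rfl step, ← Finset.mul_sum]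
  congr 1
  rw [Nat.add_choose_eq, Finset.Nat.sum_antidiagonal_eq_sum_range_succ_mk]
  refine Finset.sum_congr rfl fun k hk => ?_
  have hk' : k ≤ m := by simp at hk; omega
  rw [Nat.choose_symm hk', mul_comm]

lemma S1 (n : ℕ) (t : ℝ) :
    ∑ k ∈ range (n + 1), (n.choose k : ℝ)^2 * t^(n - k) * (t + 1)^k = Ph n t := by
  have refl1 : ∑ k ∈ range (n + 1), (n.choose k : ℝ)^2 * t^(n - k) * (t + 1)^k =
      ∑ k ∈ range (n + 1), (n.choose k : ℝ)^2 * t^k * (t + 1)^(n - k) := by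
    rw [← Finset.sum_range_reflect]
    refine Finset.sum_congr rfl fun j hj => ?_
    have hj' : j ≤ n := by simp at hj; omega
    rw [show n + 1 - 1 - j = n - j by omega, Nat.choose_symm hj',
      show n - (n - j) = j by omega]
  rw [refl1]
  have expand : ∀ j ∈ range (n + 1),
      (n.choose j : ℝ)^2 * t^j * (t + 1)^(n - j) =
        ∑ i ∈ range (n + 1 - j),
          ((n.choose j * n.choose j * (n - j).choose i : ℕ) : ℝ) * t^(j + i) := by
    intro j hj
    have hj' : j ≤ n := Nat.lt_succ_iff.mp (Finset.mem_range.mp hj)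
    rw [add_pow]
    rw [Finset.mul_sum]
    rw [show n - j + 1 = n + 1 - j by omega]
    refine Finset.sum_congr rfl fun i _ => ?_
    push_cast
    ring
  rw [Finset.sum_congr rfl expand, ← Finset.sum_range_diag_flip (n + 1)
    (fun k i => ((n.choose k * n.choose k * (n - k).choose i : ℕ) : ℝ) * t^(k + i))]
  rw [Ph]
  refine Finset.sum_congr rfl fun m hm => ?_
  have hm' : m ≤ n := by simp at hm; omega
  have inner : ∀ k ∈ range (m + 1),
      ((n.choose k * n.choose k * (n - k).choose (m - k) : ℕ) : ℝ) * t^(k + (m - k)) =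
        ((n.choose k * n.choose k * (n - k).choose (m - k) : ℕ) : ℝ) * t^m := by
    intro k hk
    have hk' : k ≤ m := by simp at hk; omega
    rw [show k + (m - k) = m by omega]
  rw [Finset.sum_congr rfl inner, ← Finset.sum_mul, ← Nat.cast_sum, coefS1 hm', bc]
  push_cast
  ring

lemma legendreP_Ph (n : ℕ) (y : ℝ) : legendreP n y = Ph n ((y - 1) / 2) := by
  rw [legendreP, ← S1 n ((y - 1) / 2), Finset.mul_sum]
  refine Finset.sum_congr rfl fun k hk => ?_
  have hk' : k ≤ n := Nat.lt_succ_iff.mp (Finset.mem_range.mp hk)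
  have h2 : (y - 1) = 2 * ((y - 1) / 2) := by ring
  have h3 : (y + 1) = 2 * ((y - 1) / 2 + 1) := by ring
  rw [h2, h3, mul_pow, mul_pow, zpow_neg, zpow_natCast]
  have hpow : (2:ℝ)^(n - k) * (2:ℝ)^k = 2^n := by
    rw [← pow_add]; congr 1; omega
  have h2n : ((2:ℝ)^n) ≠ 0 := by positivity
  rw [inv_mul_eq_iff_eq_mul₀ h2n]
  linear_combination ((n.choose k : ℝ)^2 * ((y - 1) / 2)^(n - k) * ((y - 1) / 2 + 1)^k) * hpow

lemma key (t x y : ℝ) (hy : y = 2 * t + 1) (hx : x = t^2 + t) : ∀ n : ℕ,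
    (Ph n t)^2 = Wf n x ∧ (Ph (n + 1) t)^2 = Wf (n + 1) x ∧
      ((n : ℝ) + 1) * (y * (Ph (n + 1) t * Ph n t)) = (1 + 4 * x) * sg (n + 1) x := by
  subst hy hx
  intro n
  induction n with
  | zero =>
    refine ⟨?_, ?_, ?_⟩ <;>
    · norm_num [Ph, Wf, sg, bc, wc, Finset.sum_range_succ]
      try ring
  | succ n ih =>
    obtain ⟨h1, h2, h3⟩ := ih
    have hB := PhB n t
    refine ⟨h2, ?_, ?_⟩
    · have hc : ((n : ℝ) + 2)^2 ≠ 0 := by positivity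
      apply mul_left_cancel₀ hc
      have hSB := SB n (t^2 + t)
      push_cast at h1 h2 h3 hB hSB ⊢
      linear_combination (((n : ℝ) + 2) * Ph (n + 2) t
          + (2 * (n : ℝ) + 3) * (2 * t + 1) * Ph (n + 1) t - ((n : ℝ) + 1) * Ph n t) * hB
        + (2 * (n : ℝ) + 3)^2 * (2 * t + 1)^2 * h2 + ((n : ℝ) + 1)^2 * h1
        - 2 * (2 * (n : ℝ) + 3) * h3 - hSB
    · have hSA := SA n (t^2 + t)
      push_cast at h2 h3 hB hSA ⊢
      linear_combination ((2 * t + 1) * Ph (n + 1) t) * hB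
        + (2 * (n : ℝ) + 3) * (2 * t + 1)^2 * h2 - h3 - (1 + 4 * (t^2 + t)) * hSA

/-- Clausen's identity under the substitution `y² = 1 + 4x`:
`P_n(y)² = ∑_{k=0}^n C(n,k) C(n+k,n) C(2k,k) x^k`. -/
theorem legendre_sq_clausen_sub (n : ℕ) (x y : ℝ) (h : y^2 = 1 + 4 * x) :
    (legendreP n y)^2 =
      ∑ k ∈ Finset.range (n + 1),
        (n.choose k : ℝ) * ((n + k).choose n : ℝ) * ((2 * k).choose k : ℝ) * x^k := by
  have hy : y = 2 * ((y - 1) / 2) + 1 := by ring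
  have hx : x = ((y - 1) / 2)^2 + ((y - 1) / 2) := by linear_combination -h / 4
  obtain ⟨h1, -, -⟩ := key ((y - 1) / 2) x y hy hx n
  rw [legendreP_Ph, h1, Wf]
  rfl
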